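/- arXiv:1608.08843 — 2 statements merged into one kernel-verified Lean document; each statement's English description precedes it below -/
import Mathlib

section
/- Let k ≥ 2, let P be a finite poset excluding k+k, with height h and maximum chain C = {c_1 < … < c_h}. Suppose z, w ∈ P − C satisfy dn(z) < up(w) and w ≤ z in P. Then every chain C′ contained in P − C with least element w and greatest element z has at most 4k−4 elements. -/
variable {α : Type*}

/-- A linear extension of a partial order, given as a binary relation. -/
def IsLinExt [PartialOrder α] (r : α → α → Prop) : Prop :=
  IsLinearOrder α r ∧ ∀ x y : α, x ≤ y → r x y

/-- A realizer: a family of linear extensions whose intersection is the order. -/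
def IsRealizer [PartialOrder α] {d : ℕ} (L : Fin d → α → α → Prop) : Prop :=
  (∀ i, IsLinExt (L i)) ∧ ∀ x y : α, x ≤ y ↔ ∀ i, L i x y

/-- The order dimension of a poset: the least positive `d` admitting a realizer of size `d`. -/
noncomputable def pdim (α : Type*) [PartialOrder α] : ℕ :=
  sInf {d | 0 < d ∧ ∃ L : Fin d → α → α → Prop, IsRealizer L}

/-- The set of (ordered) incomparable pairs of a poset. -/
def IncPairs (α : Type*) [PartialOrder α] : Set (α × α) :=
  {p | ¬ p.1 ≤ p.2 ∧ ¬ p.2 ≤ p.1}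

/-- `r` reverses every pair `(x, y)` in `S`, i.e. `x > y` in `r`. -/
def Reverses [PartialOrder α] (r : α → α → Prop) (S : Set (α × α)) : Prop :=
  ∀ p ∈ S, r p.2 p.1 ∧ ¬ r p.1 p.2

/-- A set of incomparable pairs is reversible if some linear extension reverses all of them. -/
def Reversible [PartialOrder α] (S : Set (α × α)) : Prop :=
  ∃ r, IsLinExt r ∧ Reverses r S

/-- `d` linear extensions suffice to reverse every pair of `S` (i.e. `dim S ≤ d`). -/
def RealizerOn [PartialOrder α] (d : ℕ) (S : Set (α × α)) : Prop :=
  ∃ L : Fin d → α → α → Prop, (∀ i, IsLinExt (L i)) ∧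
    ∀ p ∈ S, ∃ i, L i p.2 p.1 ∧ ¬ L i p.1 p.2

/-- The height of a subset of a poset: the maximum size of a chain contained in it. -/
noncomputable def heightSet [PartialOrder α] (S : Set α) : ℕ :=
  sSup {n | ∃ t : Finset α, ↑t ⊆ S ∧ IsChain (· ≤ ·) (↑t : Set α) ∧ t.card = n}

/-- The height of a poset: the maximum size of a chain. -/
noncomputable def pheight (α : Type*) [PartialOrder α] : ℕ :=
  heightSet (Set.univ : Set α)

/-- The poset `k + k`: the disjoint sum of two `k`-element chains. -/
def TwoChains (k : ℕ) : Type := Fin k ⊕ Fin k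

def TwoChains.le {k : ℕ} : TwoChains k → TwoChains k → Prop
  | .inl i, .inl j => i.1 ≤ j.1
  | .inr i, .inr j => i.1 ≤ j.1
  | _, _ => False

theorem TwoChains.le_refl' {k : ℕ} (x : TwoChains k) : TwoChains.le x x := by
  cases x <;> simp [TwoChains.le]

theorem TwoChains.le_trans' {k : ℕ} (x y z : TwoChains k)
    (hxy : TwoChains.le x y) (hyz : TwoChains.le y z) : TwoChains.le x z := by
  cases x <;> cases y <;> cases z <;> simp_all [TwoChains.le] <;> omega

theorem TwoChains.le_antisymm' {k : ℕ} (x y : TwoChains k)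
    (hxy : TwoChains.le x y) (hyx : TwoChains.le y x) : x = y := by
  cases x <;> cases y <;> simp_all [TwoChains.le] <;>
    exact congrArg _ (le_antisymm hxy hyx)

instance (k : ℕ) : PartialOrder (TwoChains k) where
  le := TwoChains.le
  le_refl := TwoChains.le_refl'
  le_trans := TwoChains.le_trans'
  le_antisymm := TwoChains.le_antisymm'

/-- Given a chain `c : Fin h → α` (listing `c_1 < ⋯ < c_h`), `dnN c z` is the greatest
1-based index `i` with `c_i ≤ z`, and `0` if there is none. -/
noncomputable def dnN [PartialOrder α] {h : ℕ} (c : Fin h → α) (z : α) : ℕ :=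
  {i : Fin h | c i ≤ z}.ncard

/-- `upN c z` is the least 1-based index `j` with `z ≤ c_j`, and `h + 1` if there is none. -/
noncomputable def upN [PartialOrder α] {h : ℕ} (c : Fin h → α) (z : α) : ℕ :=
  h + 1 - {i : Fin h | z ≤ c i}.ncard

/-- A pair `(x, y)` is dangerous when `dn(x) < dn(y) < up(x) < up(y)`. -/
def Dangerous [PartialOrder α] {h : ℕ} (c : Fin h → α) (p : α × α) : Prop :=
  dnN c p.1 < dnN c p.2 ∧ dnN c p.2 < upN c p.1 ∧ upN c p.1 < upN c p.2

/-- `Dn(i)`: points outside the chain whose down-index is exactly `i`. -/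
def Dn [PartialOrder α] {h : ℕ} (c : Fin h → α) (i : ℕ) : Set α :=
  {z | z ∉ Set.range c ∧ dnN c z = i}

/-- `Ar(i, i+1)`: points outside the chain with `dn(z) ≤ i` and `up(z) ≥ i + 1`. -/
def Ar [PartialOrder α] {h : ℕ} (c : Fin h → α) (i : ℕ) : Set α :=
  {z | z ∉ Set.range c ∧ dnN c z ≤ i ∧ i + 1 ≤ upN c z}


section Aux

lemma downclosed_eq_range (s : Finset ℕ) (hs : ∀ a b : ℕ, a ≤ b → b ∈ s → a ∈ s) :
    s = Finset.range s.card := by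
  have hsub : s ⊆ Finset.range s.card := by
    intro x hx
    have h1 : Finset.Iic x ⊆ s := fun a ha => hs a x (Finset.mem_Iic.mp ha) hx
    have h2 := Finset.card_le_card h1
    simp only [Nat.card_Iic] at h2
    exact Finset.mem_range.mpr (by omega)
  exact Finset.eq_of_subset_of_card_le hsub (by simp)

variable [PartialOrder α]

lemma dn_iff {h : ℕ} {c : Fin h → α} (hc : StrictMono c) (x : α) (i : Fin h) :
    c i ≤ x ↔ (i : ℕ) < dnN c x := by
  classical
  have hset : {j : Fin h | c j ≤ x} = ↑(Finset.univ.filter (fun j : Fin h => c j ≤ x)) := by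
    ext j; simp
  set s := Finset.univ.filter (fun j : Fin h => c j ≤ x) with hsdef
  have hcard : dnN c x = s.card := by
    rw [dnN, hset, Set.ncard_coe_finset]
  set s' := s.image Fin.val with hs'def
  have hcard' : s'.card = s.card := Finset.card_image_of_injective _ Fin.val_injective
  have hdc : ∀ a b : ℕ, a ≤ b → b ∈ s' → a ∈ s' := by
    intro a b hab hb
    simp only [hs'def, Finset.mem_image] at hb ⊢
    obtain ⟨j, hj, rfl⟩ := hb
    refine ⟨⟨a, lt_of_le_of_lt hab j.2⟩, ?_, rfl⟩
    simp only [hsdef, Finset.mem_filter, Finset.mem_univ, true_and] at hj ⊢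
    exact le_trans (hc.monotone (show (⟨a, _⟩ : Fin h) ≤ j from hab)) hj
  have hrange : s' = Finset.range s.card := hcard' ▸ downclosed_eq_range s' hdc
  constructor
  · intro hle
    have hmem : (i : ℕ) ∈ s' := Finset.mem_image.mpr ⟨i, by simp [hsdef, hle], rfl⟩
    rw [hrange, Finset.mem_range] at hmem
    omega
  · intro hlt
    have hmem : (i : ℕ) ∈ s' := by
      rw [hrange, Finset.mem_range]; omega
    obtain ⟨j, hj, hji⟩ := Finset.mem_image.mp hmem
    have : j = i := Fin.ext hji
    subst this
    simpa [hsdef] using hj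

lemma up_iff {h : ℕ} {c : Fin h → α} (hc : StrictMono c) (x : α) (i : Fin h) :
    x ≤ c i ↔ upN c x ≤ (i : ℕ) + 1 := by
  classical
  have hh : 0 < h := i.pos
  have hset : {j : Fin h | x ≤ c j} = ↑(Finset.univ.filter (fun j : Fin h => x ≤ c j)) := by
    ext j; simp
  set s := Finset.univ.filter (fun j : Fin h => x ≤ c j) with hsdef
  have hcard : upN c x = h + 1 - s.card := by
    rw [upN, hset, Set.ncard_coe_finset]
  have hsh : s.card ≤ h := by
    have := Finset.card_filter_le (Finset.univ : Finset (Fin h)) (fun j => x ≤ c j)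
    simpa using this
  set s' := s.image (fun j : Fin h => h - 1 - (j : ℕ)) with hs'def
  have hcard' : s'.card = s.card := by
    apply Finset.card_image_of_injOn
    intro a _ b _ hab
    have ha2 := a.2; have hb2 := b.2
    have hab' : h - 1 - (a : ℕ) = h - 1 - (b : ℕ) := hab
    exact Fin.ext (by omega)
  have hdc : ∀ a b : ℕ, a ≤ b → b ∈ s' → a ∈ s' := by
    intro a b hab hb
    simp only [hs'def, Finset.mem_image] at hb ⊢
    obtain ⟨j, hj, hjv⟩ := hb
    have hj2 := j.2
    refine ⟨⟨h - 1 - a, by omega⟩, ?_, by simp; omega⟩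
    simp only [hsdef, Finset.mem_filter, Finset.mem_univ, true_and] at hj ⊢
    refine le_trans hj (hc.monotone ?_)
    show (j : ℕ) ≤ h - 1 - a
    omega
  have hrange : s' = Finset.range s.card := hcard' ▸ downclosed_eq_range s' hdc
  have hi2 := i.2
  have hmain : x ≤ c i ↔ (h - 1 - (i : ℕ)) ∈ s' := by
    constructor
    · intro hle
      exact Finset.mem_image.mpr ⟨i, by simp [hsdef, hle], rfl⟩
    · intro hmem
      obtain ⟨j, hj, hji⟩ := Finset.mem_image.mp hmem
      have hj2 := j.2
      have : j = i := Fin.ext (by omega)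
      subst this
      simpa [hsdef] using hj
  rw [hmain, hrange, Finset.mem_range, hcard]
  omega

lemma dnN_le {h : ℕ} (c : Fin h → α) (x : α) : dnN c x ≤ h := by
  have := Set.ncard_le_ncard (Set.subset_univ {i : Fin h | c i ≤ x}) (Set.toFinite _)
  simpa [dnN, Set.ncard_univ, Nat.card_eq_fintype_card] using this

lemma upN_le {h : ℕ} (c : Fin h → α) (x : α) : upN c x ≤ h + 1 := Nat.sub_le _ _

lemma upN_pos {h : ℕ} (c : Fin h → α) (x : α) : 1 ≤ upN c x := by
  have : {i : Fin h | x ≤ c i}.ncard ≤ h := by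
    have := Set.ncard_le_ncard (Set.subset_univ {i : Fin h | x ≤ c i}) (Set.toFinite _)
    simpa [Set.ncard_univ, Nat.card_eq_fintype_card] using this
  rw [upN]; omega

lemma dnN_mono {h : ℕ} (c : Fin h → α) {x y : α} (hxy : x ≤ y) : dnN c x ≤ dnN c y :=
  Set.ncard_le_ncard (fun i hi => le_trans hi hxy) (Set.toFinite _)

lemma upN_mono {h : ℕ} (c : Fin h → α) {x y : α} (hxy : x ≤ y) : upN c x ≤ upN c y := by
  have hsub : {i : Fin h | y ≤ c i} ⊆ {i : Fin h | x ≤ c i} := fun i hi => hxy.trans hi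
  have := Set.ncard_le_ncard hsub (Set.toFinite _)
  rw [upN, upN]; omega

lemma dn_lt_up {h : ℕ} {c : Fin h → α} (hc : StrictMono c) {x : α} (hx : x ∉ Set.range c) :
    dnN c x < upN c x := by
  by_contra hle
  push_neg at hle
  have h1 : 1 ≤ upN c x := upN_pos c x
  have h2 : dnN c x ≤ h := dnN_le c x
  set i : Fin h := ⟨upN c x - 1, by omega⟩ with hidef
  have hci : c i ≤ x := (dn_iff hc x i).mpr (by simp [hidef]; omega)
  have hic : x ≤ c i := (up_iff hc x i).mpr (by simp [hidef]; omega)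
  exact hx ⟨i, le_antisymm hci hic⟩

lemma incomp {h : ℕ} {c : Fin h → α} (hc : StrictMono c) {x : α} (i : Fin h)
    (h1 : dnN c x ≤ (i : ℕ)) (h2 : (i : ℕ) + 1 < upN c x) : ¬ c i ≤ x ∧ ¬ x ≤ c i :=
  ⟨fun hle => by have := (dn_iff hc x i).mp hle; omega,
   fun hle => by have := (up_iff hc x i).mp hle; omega⟩

lemma chain_embed (s : Finset α) (hs : IsChain (· ≤ ·) (↑s : Set α)) (k : ℕ)
    (hk : k ≤ s.card) :
    ∃ a : Fin k → α, (∀ i j : Fin k, a i ≤ a j ↔ i ≤ j) ∧ ∀ i, a i ∈ s := by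
  classical
  letI : LinearOrder {x // x ∈ s} :=
    { (inferInstance : PartialOrder {x // x ∈ s}) with
      le_total := by
        rintro ⟨a, ha⟩ ⟨b, hb⟩
        rcases eq_or_ne a b with rfl | hne
        · exact Or.inl le_rfl
        · exact hs (Finset.mem_coe.mpr ha) (Finset.mem_coe.mpr hb) hne
      toDecidableLE := fun _ _ => Classical.dec _ }
  have hcard : Fintype.card {x // x ∈ s} = s.card := Fintype.card_coe s
  let e := monoEquivOfFin {x // x ∈ s} hcard
  refine ⟨fun i => (e (Fin.castLE hk i) : α), ?_, fun i => (e _).2⟩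
  intro i j
  constructor
  · intro hle
    exact e.le_iff_le.mp hle
  · intro hle
    exact e.le_iff_le.mpr hle

lemma no_two_chains {k : ℕ} (hexc : ¬ Nonempty (TwoChains k ↪o α))
    (a b : Fin k → α) (ha : ∀ i j, a i ≤ a j ↔ i ≤ j) (hb : ∀ i j, b i ≤ b j ↔ i ≤ j)
    (hab : ∀ i j, ¬ a i ≤ b j) (hba : ∀ i j, ¬ b i ≤ a j) : False := by
  apply hexc
  refine ⟨OrderEmbedding.ofMapLEIff (Sum.elim a b) ?_⟩
  rintro (i | i) (j | j)
  · exact (ha i j).trans Iff.rfl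
  · exact iff_of_false (hab i j) id
  · exact iff_of_false (hba i j) id
  · exact (hb i j).trans Iff.rfl

lemma window_bound {h : ℕ} {c : Fin h → α} (hc : StrictMono c)
    {k : ℕ} (hk0 : 0 < k) (hexc : ¬ Nonempty (TwoChains k ↪o α))
    (s : Finset α) (hchain : IsChain (· ≤ ·) (↑s : Set α))
    (β : ℕ) (hcond : ∀ x ∈ s, dnN c x ≤ β ∧ β + k < upN c x) :
    s.card < k := by
  by_contra hge
  push_neg at hge
  obtain ⟨a, ha, hamem⟩ := chain_embed s hchain k hge
  have hx0 := hcond (a ⟨0, hk0⟩) (hamem _)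
  have hβk : β + k ≤ h := by
    have := upN_le c (a ⟨0, hk0⟩)
    omega
  set b : Fin k → α := fun i => c ⟨β + i.1, by omega⟩ with hbdef
  have hb : ∀ i j, b i ≤ b j ↔ i ≤ j := by
    intro i j
    show c _ ≤ c _ ↔ _
    rw [hc.le_iff_le]
    simp only [Fin.mk_le_mk, Fin.le_def]
    omega
  refine no_two_chains hexc a b ha hb ?_ ?_
  · intro i j
    have hx := hcond (a i) (hamem i)
    have hj2 := j.2
    exact (incomp hc ⟨β + j.1, by omega⟩ (by simp; omega) (by simp; omega)).2
  · intro i j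
    have hx := hcond (a j) (hamem j)
    have hi2 := i.2
    exact (incomp hc ⟨β + i.1, by omega⟩ (by simp; omega) (by simp; omega)).1

lemma card_le_pheight [Fintype α] (T : Finset α) (hT : IsChain (· ≤ ·) (↑T : Set α)) :
    T.card ≤ pheight α := by
  rw [pheight, heightSet]
  apply le_csSup
  · refine ⟨Fintype.card α, ?_⟩
    rintro n ⟨t, -, -, rfl⟩
    simpa using Finset.card_le_univ t
  · exact ⟨T, by simp, hT, rfl⟩

lemma maxchain_bound [Fintype α] {c : Fin (pheight α) → α} (hc : StrictMono c)
    (s : Finset α) (hchain : IsChain (· ≤ ·) (↑s : Set α))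
    (hsc : ∀ x ∈ s, x ∉ Set.range c) (hne : s.Nonempty) (m M : ℕ) (hM : 1 ≤ M)
    (hmem : ∀ x ∈ s, m ≤ dnN c x ∧ upN c x ≤ M) :
    m + s.card + (pheight α + 1 - M) ≤ pheight α := by
  classical
  obtain ⟨x0, hx0⟩ := hne
  have hm_le : m ≤ dnN c x0 := (hmem x0 hx0).1
  have hmh : m ≤ (pheight α) := le_trans hm_le (dnN_le c x0)
  have hmM : m < M :=
    lt_of_le_of_lt hm_le (lt_of_lt_of_le (dn_lt_up hc (hsc x0 hx0)) (hmem x0 hx0).2)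
  set lowI : Finset (Fin (pheight α)) :=
    (Finset.range m).attachFin
      (fun a ha => lt_of_lt_of_le (Finset.mem_range.mp ha) hmh) with hlowI
  set highI : Finset (Fin (pheight α)) :=
    (Finset.Ico (M - 1) (pheight α)).attachFin (fun a ha => (Finset.mem_Ico.mp ha).2) with hhighI
  set low : Finset α := lowI.image c with hlowdef
  set high : Finset α := highI.image c with hhighdef
  have hlowcard : low.card = m := by
    rw [hlowdef, Finset.card_image_of_injective _ hc.injective, Finset.card_attachFin,
      Finset.card_range]
  have hhighcard : high.card = (pheight α) + 1 - M := by
    rw [hhighdef, Finset.card_image_of_injective _ hc.injective, Finset.card_attachFin,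
      Nat.card_Ico]
    omega
  have hlow_mem : ∀ y ∈ low, ∃ i : Fin (pheight α), y = c i ∧ (i : ℕ) < m := by
    intro y hy
    obtain ⟨i, hi, rfl⟩ := Finset.mem_image.mp hy
    exact ⟨i, rfl, by simpa [hlowI, Finset.mem_attachFin] using hi⟩
  have hhigh_mem : ∀ y ∈ high, ∃ i : Fin (pheight α), y = c i ∧ M - 1 ≤ (i : ℕ) := by
    intro y hy
    obtain ⟨i, hi, rfl⟩ := Finset.mem_image.mp hy
    refine ⟨i, rfl, ?_⟩
    have := Finset.mem_attachFin _ |>.mp hi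
    exact (Finset.mem_Ico.mp this).1
  have hls : ∀ y ∈ low, ∀ x ∈ s, y ≤ x := by
    intro y hy x hx
    obtain ⟨i, rfl, hi⟩ := hlow_mem y hy
    exact (dn_iff hc x i).mpr (lt_of_lt_of_le hi (hmem x hx).1)
  have hsh2 : ∀ x ∈ s, ∀ y ∈ high, x ≤ y := by
    intro x hx y hy
    obtain ⟨i, rfl, hi⟩ := hhigh_mem y hy
    refine (up_iff hc x i).mpr ?_
    have := (hmem x hx).2
    omega
  have hlh : ∀ y ∈ low, ∀ y' ∈ high, y ≤ y' := by
    intro y hy y' hy'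
    obtain ⟨i, rfl, hi⟩ := hlow_mem y hy
    obtain ⟨j, rfl, hj⟩ := hhigh_mem y' hy'
    exact hc.monotone (show (i : ℕ) ≤ (j : ℕ) by omega)
  set T : Finset α := low ∪ s ∪ high with hT
  have hTchain : IsChain (· ≤ ·) (↑T : Set α) := by
    intro x hx y hy hxy
    simp only [hT, Finset.coe_union, Set.mem_union, Finset.mem_coe] at hx hy
    have hcc : ∀ u v : α, u ∈ low ∨ u ∈ high → v ∈ low ∨ v ∈ high → u ≤ v ∨ v ≤ u := by
      intro u v hu hv
      have hu' : ∃ i : Fin (pheight α), u = c i := by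
        rcases hu with hu | hu
        · obtain ⟨i, rfl, -⟩ := hlow_mem u hu; exact ⟨i, rfl⟩
        · obtain ⟨i, rfl, -⟩ := hhigh_mem u hu; exact ⟨i, rfl⟩
      have hv' : ∃ i : Fin (pheight α), v = c i := by
        rcases hv with hv | hv
        · obtain ⟨i, rfl, -⟩ := hlow_mem v hv; exact ⟨i, rfl⟩
        · obtain ⟨i, rfl, -⟩ := hhigh_mem v hv; exact ⟨i, rfl⟩
      obtain ⟨i, rfl⟩ := hu'
      obtain ⟨j, rfl⟩ := hv'
      rcases le_total i j with hij | hij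
      · exact Or.inl (hc.monotone hij)
      · exact Or.inr (hc.monotone hij)
    rcases hx with (hx | hx) | hx <;> rcases hy with (hy | hy) | hy
    · exact hcc x y (Or.inl hx) (Or.inl hy)
    · exact Or.inl (hls x hx y hy)
    · exact hcc x y (Or.inl hx) (Or.inr hy)
    · exact Or.inr (hls y hy x hx)
    · exact hchain hx hy hxy
    · exact Or.inl (hsh2 x hx y hy)
    · exact hcc x y (Or.inr hx) (Or.inl hy)
    · exact Or.inr (hsh2 y hy x hx)
    · exact hcc x y (Or.inr hx) (Or.inr hy)
  have hdls : Disjoint low s := by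
    rw [Finset.disjoint_left]
    intro y hy hys
    obtain ⟨i, rfl, -⟩ := hlow_mem y hy
    exact hsc _ hys ⟨i, rfl⟩
  have hdhs : Disjoint s high := by
    rw [Finset.disjoint_right]
    intro y hy hys
    obtain ⟨i, rfl, -⟩ := hhigh_mem y hy
    exact hsc _ hys ⟨i, rfl⟩
  have hdlh : Disjoint low high := by
    rw [Finset.disjoint_left]
    intro y hy hyh
    obtain ⟨i, heq, hi⟩ := hlow_mem y hy
    obtain ⟨j, heq', hj⟩ := hhigh_mem y hyh
    have : i = j := hc.injective (heq ▸ heq')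
    omega
  have hdT : Disjoint (low ∪ s) high := by
    rw [Finset.disjoint_union_left]; exact ⟨hdlh, hdhs⟩
  have hcardT : T.card = m + s.card + ((pheight α) + 1 - M) := by
    rw [hT, Finset.card_union_of_disjoint hdT, Finset.card_union_of_disjoint hdls,
      hlowcard, hhighcard]
  have := card_le_pheight T hTchain
  omega

end Aux

/-- If `P` excludes `k + k`, `C` is a maximum chain, `z, w ∉ C`, `dn(z) < up(w)` and
`w ≤ z`, then every chain in `P − C` with least element `w` and greatest element `z`
has at most `4k − 4` elements. -/
theorem chain_between_card_le {α : Type*} [PartialOrder α] [Fintype α] (k : ℕ) (hk : 2 ≤ k)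
    (hexc : ¬ Nonempty (TwoChains k ↪o α))
    (c : Fin (pheight α) → α) (hc : StrictMono c)
    (z w : α) (hz : z ∉ Set.range c) (hw : w ∉ Set.range c)
    (hdu : dnN c z < upN c w) (hwz : w ≤ z)
    (t : Finset α) (htC : ∀ x ∈ t, x ∉ Set.range c)
    (htchain : IsChain (· ≤ ·) (↑t : Set α))
    (hwt : w ∈ t) (hzt : z ∈ t) (hbound : ∀ x ∈ t, w ≤ x ∧ x ≤ z) :
    t.card ≤ 4 * k - 4 := by
  classical
  have hk0 : 0 < k := by omega
  set dz := dnN c z with hdz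
  set uw := upN c w with huw
  have huwh : uw ≤ pheight α + 1 := upN_le c w
  have hfacts : ∀ x ∈ t, dnN c x ≤ dz ∧ uw ≤ upN c x := fun x hx =>
    ⟨dnN_mono c (hbound x hx).2, upN_mono c (hbound x hx).1⟩
  by_cases hcase : dz + k < uw
  · have := window_bound hc hk0 hexc t htchain dz
      (fun x hx => ⟨(hfacts x hx).1, by have := (hfacts x hx).2; omega⟩)
    omega
  · push_neg at hcase
    set P : α → Prop := fun x => dnN c x + k + 1 ≤ uw with hP
    set Q : α → Prop := fun x => dz + k + 1 ≤ upN c x with hQ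
    have hsubL : ↑(t.filter (fun x => P x)) ⊆ (↑t : Set α) := by
      intro x hx; simpa using (Finset.filter_subset _ t (Finset.mem_coe.mp hx))
    have hsubH : ↑(t.filter (fun x => ¬ P x ∧ Q x)) ⊆ (↑t : Set α) := by
      intro x hx; simpa using (Finset.filter_subset _ t (Finset.mem_coe.mp hx))
    have hsubM : ↑(t.filter (fun x => ¬ P x ∧ ¬ Q x)) ⊆ (↑t : Set α) := by
      intro x hx; simpa using (Finset.filter_subset _ t (Finset.mem_coe.mp hx))
    have hL : (t.filter (fun x => P x)).card < k := by
      apply window_bound hc hk0 hexc _ (htchain.mono hsubL) (uw - k - 1)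
      intro x hx
      rw [Finset.mem_filter] at hx
      have h1 := (hfacts x hx.1).2
      have h2 : dnN c x + k + 1 ≤ uw := hx.2
      exact ⟨by omega, by omega⟩
    have hH : (t.filter (fun x => ¬ P x ∧ Q x)).card < k := by
      apply window_bound hc hk0 hexc _ (htchain.mono hsubH) dz
      intro x hx
      rw [Finset.mem_filter] at hx
      have h1 := (hfacts x hx.1).1
      have h2 : dz + k + 1 ≤ upN c x := hx.2.2
      exact ⟨h1, by omega⟩
    have hMb : (t.filter (fun x => ¬ P x ∧ ¬ Q x)).card ≤ 2 * k - 2 := by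
      set sM := t.filter (fun x => ¬ P x ∧ ¬ Q x) with hsM
      rcases sM.eq_empty_or_nonempty with he | hne
      · rw [he]; simp
      · have hb := maxchain_bound hc sM (htchain.mono hsubM)
          (fun x hx => htC x (Finset.mem_filter.mp hx).1) hne (uw - k) (dz + k)
          (by omega)
          (fun x hx => by
            have hx' := Finset.mem_filter.mp hx
            have h1 : ¬ (dnN c x + k + 1 ≤ uw) := hx'.2.1
            have h2 : ¬ (dz + k + 1 ≤ upN c x) := hx'.2.2
            exact ⟨by omega, by omega⟩)
        omega
    have hsub : t ⊆ (t.filter (fun x => P x)) ∪ (t.filter (fun x => ¬ P x ∧ Q x))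
        ∪ (t.filter (fun x => ¬ P x ∧ ¬ Q x)) := by
      intro x hx
      simp only [Finset.mem_union, Finset.mem_filter]
      tauto
    have hc1 := Finset.card_le_card hsub
    have hc2 := Finset.card_union_le ((t.filter (fun x => P x)) ∪ (t.filter (fun x => ¬ P x ∧ Q x)))
      (t.filter (fun x => ¬ P x ∧ ¬ Q x))
    have hc3 := Finset.card_union_le (t.filter (fun x => P x)) (t.filter (fun x => ¬ P x ∧ Q x))
    omega
end

section
/- Let k ≥ 2 and let P be a finite poset excluding k+k, with height h and maximum chain C = {c_1 < … < c_h}. If every convex subposet Q of P of height at most 2k−2 satisfies dim(Q) ≤ d_0, then there exists a family of at most 2d_0 linear extensions of P reversing every safe incomparable pair of P. -/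
variable {α : Type*}

section AuxChar
variable [PartialOrder α] {h : ℕ} {c : Fin h → α}

lemma dn_char (hc : StrictMono c) (z : α) (t : Fin h) :
    c t ≤ z ↔ (t : ℕ) < dnN c z := by
  classical
  have hfin : ({i : Fin h | c i ≤ z}).Finite := Set.toFinite _
  have hcard : dnN c z = hfin.toFinset.card := Set.ncard_eq_toFinset_card _ hfin
  constructor
  · intro ht
    have hsub : Finset.Iic t ⊆ hfin.toFinset := by
      intro s hs
      simp only [Finset.mem_Iic] at hs
      simp only [Set.Finite.mem_toFinset, Set.mem_setOf_eq]
      exact le_trans (hc.monotone hs) ht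
    have := Finset.card_le_card hsub
    rw [Fin.card_Iic] at this
    omega
  · intro ht
    by_contra hle
    have hsub : hfin.toFinset ⊆ Finset.Iio t := by
      intro s hs
      simp only [Set.Finite.mem_toFinset, Set.mem_setOf_eq] at hs
      simp only [Finset.mem_Iio]
      by_contra hst
      exact hle (le_trans (hc.monotone (not_lt.mp hst)) hs)
    have := Finset.card_le_card hsub
    rw [Fin.card_Iio] at this
    omega

lemma upcard_le (z : α) : {i : Fin h | z ≤ c i}.ncard ≤ h := by
  classical
  have hfin : ({i : Fin h | z ≤ c i}).Finite := Set.toFinite _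
  rw [Set.ncard_eq_toFinset_card _ hfin]
  have := Finset.card_le_univ hfin.toFinset
  simpa using this

lemma up_char (hc : StrictMono c) (z : α) (t : Fin h) :
    z ≤ c t ↔ upN c z ≤ (t : ℕ) + 1 := by
  classical
  have hfin : ({i : Fin h | z ≤ c i}).Finite := Set.toFinite _
  have hcard : {i : Fin h | z ≤ c i}.ncard = hfin.toFinset.card :=
    Set.ncard_eq_toFinset_card _ hfin
  have hle : {i : Fin h | z ≤ c i}.ncard ≤ h := upcard_le z
  have hth : (t : ℕ) < h := t.isLt
  rw [upN]
  constructor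
  · intro ht
    have hsub : Finset.Ici t ⊆ hfin.toFinset := by
      intro s hs
      simp only [Finset.mem_Ici] at hs
      simp only [Set.Finite.mem_toFinset, Set.mem_setOf_eq]
      exact le_trans ht (hc.monotone hs)
    have := Finset.card_le_card hsub
    rw [Fin.card_Ici] at this
    omega
  · intro ht
    by_contra hzc
    have hsub : hfin.toFinset ⊆ Finset.Ioi t := by
      intro s hs
      simp only [Set.Finite.mem_toFinset, Set.mem_setOf_eq] at hs
      simp only [Finset.mem_Ioi]
      by_contra hst
      exact hzc (le_trans hs (hc.monotone (not_lt.mp hst)))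
    have := Finset.card_le_card hsub
    rw [Fin.card_Ioi] at this
    omega

lemma dn_le (z : α) : dnN c z ≤ h := by
  classical
  have hfin : ({i : Fin h | c i ≤ z}).Finite := Set.toFinite _
  rw [dnN, Set.ncard_eq_toFinset_card _ hfin]
  have := Finset.card_le_univ hfin.toFinset
  simpa using this

lemma up_pos (z : α) : 1 ≤ upN c z := by
  have := upcard_le (c := c) z
  rw [upN]; omega

lemma up_le (z : α) : upN c z ≤ h + 1 := by
  rw [upN]; omega

lemma dn_mono {z z' : α} (hzz : z ≤ z') : dnN c z ≤ dnN c z' := by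
  apply Set.ncard_le_ncard _ (Set.toFinite _)
  intro t ht
  exact le_trans ht hzz

lemma up_mono {z z' : α} (hzz : z ≤ z') : upN c z ≤ upN c z' := by
  have : {i : Fin h | z' ≤ c i}.ncard ≤ {i : Fin h | z ≤ c i}.ncard := by
    apply Set.ncard_le_ncard _ (Set.toFinite _)
    intro t ht
    exact le_trans hzz ht
  rw [upN, upN]; omega

lemma dn_c (hc : StrictMono c) (t : Fin h) : dnN c (c t) = (t : ℕ) + 1 := by
  have h1 : {i : Fin h | c i ≤ c t} = ↑(Finset.Iic t) := by
    ext s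
    simp [hc.le_iff_le]
  rw [dnN, h1, Set.ncard_coe_finset, Fin.card_Iic]

lemma up_c (hc : StrictMono c) (t : Fin h) : upN c (c t) = (t : ℕ) + 1 := by
  have h1 : {i : Fin h | c t ≤ c i} = ↑(Finset.Ici t) := by
    ext s
    simp [hc.le_iff_le]
  have hth : (t : ℕ) < h := t.isLt
  rw [upN, h1, Set.ncard_coe_finset, Fin.card_Ici]
  omega

lemma up_ge_dn_succ (hc : StrictMono c) {z : α} (hz : z ∉ Set.range c) :
    dnN c z + 1 ≤ upN c z := by
  by_contra hcon
  have h1 : 1 ≤ upN c z := up_pos z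
  have h2 : dnN c z ≤ h := dn_le z
  have hidx : upN c z - 1 < h := by omega
  set t : Fin h := ⟨upN c z - 1, hidx⟩
  have hzc : z ≤ c t := by
    rw [up_char hc]
    simp only [t]
    omega
  have hcz : c t ≤ z := by
    rw [dn_char hc]
    simp only [t]
    omega
  exact hz ⟨t, le_antisymm hcz hzc⟩

lemma le_c_of_up (hc : StrictMono c) {z : α} (hup : upN c z ≤ h) :
    z ≤ c ⟨upN c z - 1, by have := up_pos (c := c) z; omega⟩ := by
  rw [up_char hc]
  have := up_pos (c := c) z
  simp only []
  omega

lemma c_dn_le (hc : StrictMono c) {z : α} (hdn : 1 ≤ dnN c z) :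
    c ⟨dnN c z - 1, by have := dn_le (c := c) z; omega⟩ ≤ z := by
  rw [dn_char hc]
  simp only []
  omega

end AuxChar

/-- `Up(u)`: points outside the chain whose up-index is exactly `u`. -/
def UpS [PartialOrder α] {h : ℕ} (c : Fin h → α) (u : ℕ) : Set α :=
  {z | z ∉ Set.range c ∧ upN c z = u}

section AuxChain
variable [PartialOrder α]

lemma chain_enum : ∀ (n : ℕ) (t : Finset α), IsChain (· ≤ ·) (↑t : Set α) → t.card = n →
    ∃ f : Fin n → α, StrictMono f ∧ ∀ j, f j ∈ t := by
  classical
  intro n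
  induction n with
  | zero =>
    intro t _ _
    exact ⟨Fin.elim0, fun a => a.elim0, fun j => j.elim0⟩
  | succ m ih =>
    intro t hch hcard
    have hne : t.Nonempty := by
      rw [← Finset.card_pos, hcard]; omega
    obtain ⟨mn, hmn, hmin⟩ := Finset.exists_minimal hne
    have hcard' : (t.erase mn).card = m := by
      rw [Finset.card_erase_of_mem hmn, hcard]
      omega
    have hch' : IsChain (· ≤ ·) (↑(t.erase mn) : Set α) := by
      intro x hx y hy hxy
      exact hch (Finset.mem_coe.mpr (Finset.erase_subset _ _ (Finset.mem_coe.mp hx)))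
        (Finset.mem_coe.mpr (Finset.erase_subset _ _ (Finset.mem_coe.mp hy))) hxy
    obtain ⟨f', hf', hmem'⟩ := ih (t.erase mn) hch' hcard'
    have key : ∀ x ∈ t.erase mn, mn < x := by
      intro x hx
      have hxt : x ∈ t := Finset.erase_subset _ _ hx
      have hxne : x ≠ mn := Finset.ne_of_mem_erase hx
      rcases hch (Finset.mem_coe.mpr hxt) (Finset.mem_coe.mpr hmn) hxne with h1 | h1
      · exact absurd (le_antisymm h1 (hmin hxt h1)) hxne
      · exact lt_of_le_of_ne h1 (Ne.symm hxne)
    refine ⟨fun j => if hj : j.1 = 0 then mn else f' ⟨j.1 - 1, by omega⟩, ?_, ?_⟩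
    · intro a b hab
      have hab' : a.1 < b.1 := hab
      by_cases ha : a.1 = 0
      · have hb : ¬ b.1 = 0 := by omega
        simp only [ha, dif_pos, hb, dif_neg, not_false_iff]
        exact key _ (hmem' _)
      · have hb : ¬ b.1 = 0 := by omega
        simp only [ha, hb, dif_neg, not_false_iff]
        exact hf' (by simp only [Fin.mk_lt_mk]; omega)
    · intro j
      by_cases hj : j.1 = 0
      · simp only [hj, dif_pos]; exact hmn
      · simp only [hj, dif_neg, not_false_iff]
        exact Finset.erase_subset _ _ (hmem' _)

lemma heightSet_le_of {S : Set α} {m : ℕ}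
    (H : ∀ t : Finset α, ↑t ⊆ S → IsChain (· ≤ ·) (↑t : Set α) → t.card ≤ m) :
    heightSet S ≤ m := by
  apply csSup_le
  · exact ⟨0, ⟨∅, by simp, by simp [IsChain], by simp⟩⟩
  · rintro n ⟨t, h1, h2, h3⟩
    exact h3 ▸ H t h1 h2

lemma chain_card_le_pheight [Fintype α] (t : Finset α)
    (hch : IsChain (· ≤ ·) (↑t : Set α)) : t.card ≤ pheight α := by
  apply le_csSup
  · refine ⟨Fintype.card α, ?_⟩
    rintro n ⟨s, _, _, h3⟩
    exact h3 ▸ Finset.card_le_univ s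
  · exact ⟨t, Set.subset_univ _, hch, rfl⟩

end AuxChain

section HeightBound
variable [PartialOrder α] {h k : ℕ} {c : Fin h → α}

lemma dn_chain_card (hc : StrictMono c)
    (hmax : ∀ t : Finset α, IsChain (· ≤ ·) (↑t : Set α) → t.card ≤ h)
    (hexc : ¬ Nonempty (TwoChains k ↪o α)) (hk : 2 ≤ k)
    (i : ℕ) (t : Finset α) (hsub : ↑t ⊆ Dn c i) (hch : IsChain (· ≤ ·) (↑t : Set α)) :
    t.card ≤ 2 * k - 2 := by
  classical
  by_contra hcon
  set n := t.card with hn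
  have hn1 : 2 * k - 1 ≤ n := by omega
  obtain ⟨f, hf, hmem⟩ := chain_enum n t hch rfl
  have hDn : ∀ j : Fin n, dnN c (f j) = i := fun j => (hsub (hmem j)).2
  have hNR : ∀ j : Fin n, f j ∉ Set.range c := fun j => (hsub (hmem j)).1
  set q := n - k + 1 with hq
  have hqn : q - 1 < n := by omega
  set w := f ⟨q - 1, hqn⟩ with hw
  set u := upN c w with hu
  have hu1 : i + 1 ≤ u := by
    have h1 := up_ge_dn_succ hc (hNR ⟨q - 1, hqn⟩)
    rw [hDn] at h1
    exact h1
  have hu2 : u ≤ h + 1 := up_le w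
  have hih : i ≤ h := by
    have := dn_le (c := c) w
    rw [hDn] at this
    exact this
  have hupmono : ∀ j : Fin n, q - 1 ≤ j.1 → u ≤ upN c (f j) := by
    intro j hj
    exact up_mono (hf.monotone (show (⟨q - 1, hqn⟩ : Fin n) ≤ j from hj))
  have hupmono' : ∀ j : Fin n, j.1 ≤ q - 1 → upN c (f j) ≤ u := by
    intro j hj
    exact up_mono (hf.monotone (show j ≤ (⟨q - 1, hqn⟩ : Fin n) from hj))
  -- Subclaim 1 : i + q + 1 ≤ u
  have hsc1 : i + q + 1 ≤ u := by
    by_contra hcon1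
    have hiu : u ≤ i + q := by omega
    have pflow : ∀ m ∈ Finset.range i, m < h :=
      fun m hm => lt_of_lt_of_le (Finset.mem_range.mp hm) hih
    have pfz : ∀ m ∈ Finset.range q, m < n := by
      intro m hm
      have := Finset.mem_range.mp hm
      omega
    have pfhigh : ∀ m ∈ Finset.Ico (u - 1) h, m < h := fun m hm => (Finset.mem_Ico.mp hm).2
    set T : Finset α := (((Finset.range i).attachFin pflow).image c ∪
      ((Finset.range q).attachFin pfz).image f) ∪
      ((Finset.Ico (u - 1) h).attachFin pfhigh).image c with hT
    have hcf : ∀ (a : Fin h), a.1 < i → ∀ (j : Fin n), c a ≤ f j := by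
      intro a ha j
      rw [dn_char hc, hDn]
      exact ha
    have hfc : ∀ (j : Fin n), j.1 < q → ∀ (a : Fin h), u - 1 ≤ a.1 → f j ≤ c a := by
      intro j hj a ha
      rw [up_char hc]
      have := hupmono' j (by omega)
      omega
    have hchT : IsChain (· ≤ ·) (↑T : Set α) := by
      have comp : ∀ x ∈ T, ∀ y ∈ T, x ≤ y ∨ y ≤ x := by
        intro x hx y hy
        rw [hT] at hx hy
        simp only [Finset.mem_union, Finset.mem_image, Finset.mem_attachFin,
          Finset.mem_range, Finset.mem_Ico] at hx hy
        rcases hx with (⟨a, ha, rfl⟩ | ⟨j, hj, rfl⟩) | ⟨a, ha, rfl⟩ <;>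
          rcases hy with (⟨b, hb, rfl⟩ | ⟨j', hj', rfl⟩) | ⟨b, hb, rfl⟩
        · rcases le_total a b with h1 | h1
          · exact Or.inl (hc.monotone h1)
          · exact Or.inr (hc.monotone h1)
        · exact Or.inl (hcf a ha j')
        · rcases le_total a b with h1 | h1
          · exact Or.inl (hc.monotone h1)
          · exact Or.inr (hc.monotone h1)
        · exact Or.inr (hcf b hb j)
        · rcases le_total j j' with h1 | h1
          · exact Or.inl (hf.monotone h1)
          · exact Or.inr (hf.monotone h1)
        · exact Or.inl (hfc j hj b hb.1)
        · rcases le_total a b with h1 | h1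
          · exact Or.inl (hc.monotone h1)
          · exact Or.inr (hc.monotone h1)
        · exact Or.inr (hfc j' hj' a ha.1)
        · rcases le_total a b with h1 | h1
          · exact Or.inl (hc.monotone h1)
          · exact Or.inr (hc.monotone h1)
      intro x hx y hy _
      exact comp x hx y hy
    have hcardT : T.card = i + q + (h - (u - 1)) := by
      have hd1 : Disjoint (((Finset.range i).attachFin pflow).image c)
          (((Finset.range q).attachFin pfz).image f) := by
        rw [Finset.disjoint_left]
        rintro x hx hx'
        obtain ⟨a, _, ha2⟩ := Finset.mem_image.mp hx
        obtain ⟨j, _, hj2⟩ := Finset.mem_image.mp hx'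
        exact hNR j ⟨a, ha2.trans hj2.symm⟩
      have hd2 : Disjoint ((((Finset.range i).attachFin pflow).image c ∪
          ((Finset.range q).attachFin pfz).image f))
          (((Finset.Ico (u - 1) h).attachFin pfhigh).image c) := by
        rw [Finset.disjoint_left]
        rintro x hx hx'
        obtain ⟨b, hb, rfl⟩ := Finset.mem_image.mp hx'
        have hb' : u - 1 ≤ b.1 := (Finset.mem_Ico.mp ((Finset.mem_attachFin _).mp hb)).1
        rcases Finset.mem_union.mp hx with hx1 | hx1
        · obtain ⟨a, ha, ha2⟩ := Finset.mem_image.mp hx1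
          have ha' : a.1 < i := Finset.mem_range.mp ((Finset.mem_attachFin _).mp ha)
          have : a = b := hc.injective ha2
          omega
        · obtain ⟨j, _, hj2⟩ := Finset.mem_image.mp hx1
          exact hNR j ⟨b, hj2.symm⟩
      rw [hT, Finset.card_union_of_disjoint hd2, Finset.card_union_of_disjoint hd1,
        Finset.card_image_of_injective _ hc.injective,
        Finset.card_image_of_injective _ hf.injective,
        Finset.card_image_of_injective _ hc.injective,
        Finset.card_attachFin, Finset.card_attachFin, Finset.card_attachFin,
        Finset.card_range, Finset.card_range, Nat.card_Ico]
    have := hmax T hchT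
    rw [hcardT] at this
    omega
  -- Subclaim 2 : u ≤ i + k
  have hsc2 : u ≤ i + k := by
    by_contra hcon2
    have hik : i + k + 1 ≤ u := by omega
    have hikh : i + k ≤ h := by omega
    have hA : ∀ s : Fin k, i + s.1 < h := by
      intro s
      have := s.isLt
      omega
    have hB : ∀ s : Fin k, q - 1 + s.1 < n := by
      intro s
      have := s.isLt
      omega
    apply hexc
    refine ⟨OrderEmbedding.ofMapLEIff
      (fun x : TwoChains k => match x with
        | .inl s => c ⟨i + s.1, hA s⟩
        | .inr s => f ⟨q - 1 + s.1, hB s⟩) ?_⟩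
    intro a b
    rcases a with s | s <;> rcases b with s' | s'
    · show c ⟨i + s.1, hA s⟩ ≤ c ⟨i + s'.1, hA s'⟩ ↔ s.1 ≤ s'.1
      rw [hc.le_iff_le]
      simp only [Fin.mk_le_mk]
      omega
    · show c ⟨i + s.1, hA s⟩ ≤ f ⟨q - 1 + s'.1, hB s'⟩ ↔ False
      simp only [iff_false]
      intro hle
      rw [dn_char hc, hDn] at hle
      have hle' : i + s.1 < i := hle
      omega
    · show f ⟨q - 1 + s.1, hB s⟩ ≤ c ⟨i + s'.1, hA s'⟩ ↔ False
      simp only [iff_false]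
      intro hle
      rw [up_char hc] at hle
      have hle' : upN c (f ⟨q - 1 + s.1, hB s⟩) ≤ i + s'.1 + 1 := hle
      have h1 := hupmono ⟨q - 1 + s.1, hB s⟩ (by simp)
      have h2 : s'.1 < k := s'.isLt
      omega
    · show f ⟨q - 1 + s.1, hB s⟩ ≤ f ⟨q - 1 + s'.1, hB s'⟩ ↔ s.1 ≤ s'.1
      rw [hf.le_iff_le]
      simp only [Fin.mk_le_mk]
      omega
  omega

lemma up_chain_card (hc : StrictMono c)
    (hmax : ∀ t : Finset α, IsChain (· ≤ ·) (↑t : Set α) → t.card ≤ h)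
    (hexc : ¬ Nonempty (TwoChains k ↪o α)) (hk : 2 ≤ k)
    (u : ℕ) (t : Finset α) (hsub : ↑t ⊆ UpS c u) (hch : IsChain (· ≤ ·) (↑t : Set α)) :
    t.card ≤ 2 * k - 2 := by
  classical
  by_contra hcon
  set n := t.card with hn
  have hn1 : 2 * k - 1 ≤ n := by omega
  obtain ⟨f, hf, hmem⟩ := chain_enum n t hch rfl
  have hUp : ∀ j : Fin n, upN c (f j) = u := fun j => (hsub (hmem j)).2
  have hNR : ∀ j : Fin n, f j ∉ Set.range c := fun j => (hsub (hmem j)).1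
  set q := n - k + 1 with hq
  have hkn : k - 1 < n := by omega
  set w := f ⟨k - 1, hkn⟩ with hw
  set i := dnN c w with hi
  have hu1 : i + 1 ≤ u := by
    have h1 := up_ge_dn_succ hc (hNR ⟨k - 1, hkn⟩)
    rw [hUp] at h1
    exact h1
  have hupos : 1 ≤ u := by
    have := up_pos (c := c) w
    rw [hUp] at this
    exact this
  have hu2 : u ≤ h + 1 := by
    have := up_le (c := c) w
    rw [hUp] at this
    exact this
  have hih : i ≤ h := dn_le w
  have hdnmono : ∀ j : Fin n, k - 1 ≤ j.1 → i ≤ dnN c (f j) := by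
    intro j hj
    exact dn_mono (hf.monotone (show (⟨k - 1, hkn⟩ : Fin n) ≤ j from hj))
  have hdnmono' : ∀ j : Fin n, j.1 ≤ k - 1 → dnN c (f j) ≤ i := by
    intro j hj
    exact dn_mono (hf.monotone (show j ≤ (⟨k - 1, hkn⟩ : Fin n) from hj))
  -- Subclaim 1 : i + q + 1 ≤ u
  have hsc1 : i + q + 1 ≤ u := by
    by_contra hcon1
    have hiu : u ≤ i + q := by omega
    have pflow : ∀ m ∈ Finset.range i, m < h :=
      fun m hm => lt_of_lt_of_le (Finset.mem_range.mp hm) hih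
    have pfz : ∀ m ∈ Finset.Ico (k - 1) n, m < n := fun m hm => (Finset.mem_Ico.mp hm).2
    have pfhigh : ∀ m ∈ Finset.Ico (u - 1) h, m < h := fun m hm => (Finset.mem_Ico.mp hm).2
    set T : Finset α := (((Finset.range i).attachFin pflow).image c ∪
      ((Finset.Ico (k - 1) n).attachFin pfz).image f) ∪
      ((Finset.Ico (u - 1) h).attachFin pfhigh).image c with hT
    have hcf : ∀ (a : Fin h), a.1 < i → ∀ (j : Fin n), k - 1 ≤ j.1 → c a ≤ f j := by
      intro a ha j hj
      rw [dn_char hc]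
      have := hdnmono j hj
      omega
    have hfc : ∀ (j : Fin n), ∀ (a : Fin h), u - 1 ≤ a.1 → f j ≤ c a := by
      intro j a ha
      rw [up_char hc, hUp]
      omega
    have hchT : IsChain (· ≤ ·) (↑T : Set α) := by
      have comp : ∀ x ∈ T, ∀ y ∈ T, x ≤ y ∨ y ≤ x := by
        intro x hx y hy
        rw [hT] at hx hy
        simp only [Finset.mem_union, Finset.mem_image, Finset.mem_attachFin,
          Finset.mem_range, Finset.mem_Ico] at hx hy
        rcases hx with (⟨a, ha, rfl⟩ | ⟨j, hj, rfl⟩) | ⟨a, ha, rfl⟩ <;>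
          rcases hy with (⟨b, hb, rfl⟩ | ⟨j', hj', rfl⟩) | ⟨b, hb, rfl⟩
        · rcases le_total a b with h1 | h1
          · exact Or.inl (hc.monotone h1)
          · exact Or.inr (hc.monotone h1)
        · exact Or.inl (hcf a ha j' hj'.1)
        · rcases le_total a b with h1 | h1
          · exact Or.inl (hc.monotone h1)
          · exact Or.inr (hc.monotone h1)
        · exact Or.inr (hcf b hb j hj.1)
        · rcases le_total j j' with h1 | h1
          · exact Or.inl (hf.monotone h1)
          · exact Or.inr (hf.monotone h1)
        · exact Or.inl (hfc j b hb.1)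
        · rcases le_total a b with h1 | h1
          · exact Or.inl (hc.monotone h1)
          · exact Or.inr (hc.monotone h1)
        · exact Or.inr (hfc j' a ha.1)
        · rcases le_total a b with h1 | h1
          · exact Or.inl (hc.monotone h1)
          · exact Or.inr (hc.monotone h1)
      intro x hx y hy _
      exact comp x hx y hy
    have hcardT : T.card = i + (n - (k - 1)) + (h - (u - 1)) := by
      have hd1 : Disjoint (((Finset.range i).attachFin pflow).image c)
          (((Finset.Ico (k - 1) n).attachFin pfz).image f) := by
        rw [Finset.disjoint_left]
        rintro x hx hx'
        obtain ⟨a, _, ha2⟩ := Finset.mem_image.mp hx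
        obtain ⟨j, _, hj2⟩ := Finset.mem_image.mp hx'
        exact hNR j ⟨a, ha2.trans hj2.symm⟩
      have hd2 : Disjoint ((((Finset.range i).attachFin pflow).image c ∪
          ((Finset.Ico (k - 1) n).attachFin pfz).image f))
          (((Finset.Ico (u - 1) h).attachFin pfhigh).image c) := by
        rw [Finset.disjoint_left]
        rintro x hx hx'
        obtain ⟨b, hb, rfl⟩ := Finset.mem_image.mp hx'
        have hb' : u - 1 ≤ b.1 := (Finset.mem_Ico.mp ((Finset.mem_attachFin _).mp hb)).1
        rcases Finset.mem_union.mp hx with hx1 | hx1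
        · obtain ⟨a, ha, ha2⟩ := Finset.mem_image.mp hx1
          have ha' : a.1 < i := Finset.mem_range.mp ((Finset.mem_attachFin _).mp ha)
          have : a = b := hc.injective ha2
          omega
        · obtain ⟨j, _, hj2⟩ := Finset.mem_image.mp hx1
          exact hNR j ⟨b, hj2.symm⟩
      rw [hT, Finset.card_union_of_disjoint hd2, Finset.card_union_of_disjoint hd1,
        Finset.card_image_of_injective _ hc.injective,
        Finset.card_image_of_injective _ hf.injective,
        Finset.card_image_of_injective _ hc.injective,
        Finset.card_attachFin, Finset.card_attachFin, Finset.card_attachFin,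
        Finset.card_range, Nat.card_Ico, Nat.card_Ico]
    have := hmax T hchT
    rw [hcardT] at this
    omega
  -- Subclaim 2 : u ≤ i + k
  have hsc2 : u ≤ i + k := by
    by_contra hcon2
    have hik : i + k + 1 ≤ u := by omega
    have hA : ∀ s : Fin k, s.1 < n := by
      intro s
      have := s.isLt
      omega
    have hB : ∀ s : Fin k, u - 1 - k + s.1 < h := by
      intro s
      have := s.isLt
      omega
    apply hexc
    refine ⟨OrderEmbedding.ofMapLEIff
      (fun x : TwoChains k => match x with
        | .inl s => f ⟨s.1, hA s⟩
        | .inr s => c ⟨u - 1 - k + s.1, hB s⟩) ?_⟩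
    intro a b
    rcases a with s | s <;> rcases b with s' | s'
    · show f ⟨s.1, hA s⟩ ≤ f ⟨s'.1, hA s'⟩ ↔ s.1 ≤ s'.1
      rw [hf.le_iff_le]
      simp only [Fin.mk_le_mk]
    · show f ⟨s.1, hA s⟩ ≤ c ⟨u - 1 - k + s'.1, hB s'⟩ ↔ False
      simp only [iff_false]
      intro hle
      rw [up_char hc, hUp] at hle
      have hle' : u ≤ u - 1 - k + s'.1 + 1 := hle
      have h2 : s'.1 < k := s'.isLt
      omega
    · show c ⟨u - 1 - k + s.1, hB s⟩ ≤ f ⟨s'.1, hA s'⟩ ↔ False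
      simp only [iff_false]
      intro hle
      rw [dn_char hc] at hle
      have hle' : u - 1 - k + s.1 < dnN c (f ⟨s'.1, hA s'⟩) := hle
      have h1 := hdnmono' ⟨s'.1, hA s'⟩ (by have := s'.isLt; simp; omega)
      omega
    · show c ⟨u - 1 - k + s.1, hB s⟩ ≤ c ⟨u - 1 - k + s'.1, hB s'⟩ ↔ s.1 ≤ s'.1
      rw [hc.le_iff_le]
      simp only [Fin.mk_le_mk]
      omega
  omega

end HeightBound

section Realizers
variable {β : Type*} [PartialOrder β]

lemma exists_linext_reversing {a b : β} (hab : ¬ a ≤ b) (hba : ¬ b ≤ a) :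
    ∃ s : β → β → Prop, IsLinearOrder β s ∧ (∀ x y : β, x ≤ y → s x y) ∧ s b a ∧ ¬ s a b := by
  let r : β → β → Prop := fun x y => x ≤ y ∨ (x ≤ b ∧ a ≤ y)
  have hr : IsPartialOrder β r := by
    refine { refl := fun x => Or.inl le_rfl, trans := ?_, antisymm := ?_ }
    · rintro x y z (h1 | ⟨h1, h2⟩) (h3 | ⟨h3, h4⟩)
      · exact Or.inl (h1.trans h3)
      · exact Or.inr ⟨h1.trans h3, h4⟩
      · exact Or.inr ⟨h1, h2.trans h3⟩
      · exact absurd (h2.trans h3) hab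
    · rintro x y (h1 | ⟨h1, h2⟩) (h3 | ⟨h3, h4⟩)
      · exact le_antisymm h1 h3
      · exact absurd (h4.trans (h1.trans h3)) hab
      · exact absurd (h2.trans (h3.trans h1)) hab
      · exact absurd (h2.trans h3) hab
  obtain ⟨s, hs, hrs⟩ := @extend_partialOrder β r hr
  refine ⟨s, hs, fun x y hxy => hrs x y (Or.inl hxy), hrs b a (Or.inr ⟨le_rfl, le_rfl⟩), ?_⟩
  intro hsab
  have heq : a = b := hs.toIsPartialOrder.toAntisymm.antisymm a b hsab
    (hrs b a (Or.inr ⟨le_rfl, le_rfl⟩))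
  exact hab (le_of_eq heq)

lemma exists_realizer (β : Type*) [PartialOrder β] [Finite β] :
    ∃ d, 0 < d ∧ ∃ L : Fin d → β → β → Prop, IsRealizer L := by
  classical
  cases nonempty_fintype β
  obtain ⟨s0, hs0, hrs0⟩ := extend_partialOrder ((· ≤ ·) : β → β → Prop)
  have hpair : ∀ p : β × β, ∃ s : β → β → Prop, IsLinearOrder β s ∧
      (∀ x y : β, x ≤ y → s x y) ∧
      (¬ p.1 ≤ p.2 → ¬ p.2 ≤ p.1 → (s p.2 p.1 ∧ ¬ s p.1 p.2)) := by
    intro p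
    by_cases h1 : ¬ p.1 ≤ p.2 ∧ ¬ p.2 ≤ p.1
    · obtain ⟨s, hs, hext, h3, h4⟩ := exists_linext_reversing h1.1 h1.2
      exact ⟨s, hs, hext, fun _ _ => ⟨h3, h4⟩⟩
    · exact ⟨s0, hs0, fun x y hxy => hrs0 x y hxy, fun ha hb => absurd ⟨ha, hb⟩ h1⟩
  choose F hF1 hF2 hF3 using hpair
  set e := Fintype.equivFin (β × β) with he
  set d := Fintype.card (β × β) + 1 with hdd
  set LL : Fin d → β → β → Prop := fun j =>
    if hj : j.1 = 0 then s0
    else F (e.symm ⟨j.1 - 1, by have := j.isLt; omega⟩) with hLL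
  have hLL0 : ∀ (j : Fin d), j.1 = 0 → LL j = s0 := by
    intro j hj
    simp only [hLL, dif_pos hj]
  have hLL1 : ∀ (j : Fin d) (hj : ¬ j.1 = 0),
      LL j = F (e.symm ⟨j.1 - 1, by have := j.isLt; omega⟩) := by
    intro j hj
    simp only [hLL, dif_neg hj]
  refine ⟨d, Nat.succ_pos _, LL, ?_, ?_⟩
  · intro j
    by_cases hj : j.1 = 0
    · rw [hLL0 j hj]
      exact ⟨hs0, fun x y hxy => hrs0 x y hxy⟩
    · rw [hLL1 j hj]
      exact ⟨hF1 _, hF2 _⟩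
  · intro x y
    constructor
    · intro hxy j
      by_cases hj : j.1 = 0
      · rw [hLL0 j hj]; exact hrs0 x y hxy
      · rw [hLL1 j hj]; exact hF2 _ x y hxy
    · intro hall
      by_contra hxy
      by_cases hyx : y ≤ x
      · have hne : x ≠ y := fun hh => hxy (le_of_eq hh)
        have h0 := hall ⟨0, Nat.succ_pos _⟩
        rw [hLL0 ⟨0, Nat.succ_pos _⟩ rfl] at h0
        have h0' : s0 y x := hrs0 y x hyx
        exact hne (hs0.toIsPartialOrder.toAntisymm.antisymm x y h0 h0')
      · set p : β × β := (x, y) with hp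
        have hjlt : (e p).1 + 1 < d := by
          have := (e p).isLt; omega
        have hj := hall ⟨(e p).1 + 1, hjlt⟩
        rw [hLL1 ⟨(e p).1 + 1, hjlt⟩ (by simp)] at hj
        have hidx : (⟨(e p).1 + 1 - 1, by have := (e p).isLt; omega⟩ :
            Fin (Fintype.card (β × β))) = e p := Fin.ext (by simp)
        rw [hidx, Equiv.symm_apply_apply] at hj
        exact (hF3 p hxy hyx).2 hj

lemma realizer_of_pdim_le {d0 : ℕ} [Finite β] (hd : pdim β ≤ d0) :
    ∃ L : Fin d0 → β → β → Prop, (∀ j, IsLinExt (L j)) ∧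
      ∀ a b : β, ¬ a ≤ b → ∃ j, L j b a ∧ ¬ L j a b := by
  have hne : {d | 0 < d ∧ ∃ L : Fin d → β → β → Prop, IsRealizer L}.Nonempty :=
    exists_realizer β
  have hmem : pdim β ∈ {d | 0 < d ∧ ∃ L : Fin d → β → β → Prop, IsRealizer L} :=
    Nat.sInf_mem hne
  obtain ⟨hpos, L, hL⟩ := hmem
  have hp1 : 1 ≤ pdim β := hpos
  refine ⟨fun j => L ⟨min j.1 (pdim β - 1), by omega⟩, fun j => hL.1 _, ?_⟩
  intro a b hab
  have hex : ∃ jj : Fin (pdim β), ¬ L jj a b := by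
    by_contra hcon
    push_neg at hcon
    exact hab ((hL.2 a b).mpr hcon)
  obtain ⟨jj, hjj⟩ := hex
  have hjd : jj.1 < d0 := lt_of_lt_of_le jj.isLt hd
  have hidx : (⟨min jj.1 (pdim β - 1), by omega⟩ : Fin (pdim β)) = jj := by
    apply Fin.ext
    have := jj.isLt
    simp only []
    omega
  refine ⟨⟨jj.1, hjd⟩, ?_, ?_⟩
  · show L ⟨min jj.1 (pdim β - 1), _⟩ b a
    rw [hidx]
    rcases (hL.1 jj).1.toTotal.total b a with h1 | h1
    · exact h1
    · exact absurd h1 hjj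
  · show ¬ L ⟨min jj.1 (pdim β - 1), _⟩ a b
    rw [hidx]
    exact hjj

lemma pdim_pos (β : Type*) [PartialOrder β] [Finite β] : 1 ≤ pdim β := by
  have hne : {d | 0 < d ∧ ∃ L : Fin d → β → β → Prop, IsRealizer L}.Nonempty :=
    exists_realizer β
  exact (Nat.sInf_mem hne).1

end Realizers

/-- Transport of a relation on a subtype to the ambient type. -/
def TRel [PartialOrder α] {Q : Set α} (K : ↥Q → ↥Q → Prop) (x y : α) : Prop :=
  ∃ (hx : x ∈ Q) (hy : y ∈ Q), K ⟨x, hx⟩ ⟨y, hy⟩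

section Glue
variable [PartialOrder α] {h : ℕ} {c : Fin h → α}

lemma range_dn_eq (hc : StrictMono c) {x y : α} (hx : x ∈ Set.range c) (hy : y ∈ Set.range c)
    (hdn : dnN c x = dnN c y) : x = y := by
  obtain ⟨s, rfl⟩ := hx; obtain ⟨t, rfl⟩ := hy
  rw [dn_c hc, dn_c hc] at hdn
  exact congrArg c (Fin.ext (by omega))

lemma range_le_dn_eq (hc : StrictMono c) {x y : α} (hx : x ∈ Set.range c) (hy : y ∉ Set.range c)
    (hdn : dnN c x = dnN c y) : x ≤ y := by
  obtain ⟨s, rfl⟩ := hx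
  rw [dn_c hc] at hdn
  exact (dn_char hc y s).mpr (by omega)

lemma notrange_le_range_dn (hc : StrictMono c) {x y : α} (hx : x ∉ Set.range c)
    (hy : y ∈ Set.range c) (hdn : dnN c x = dnN c y) (hxy : x ≤ y) : False := by
  obtain ⟨s, rfl⟩ := hy
  rw [dn_c hc] at hdn
  have h1 : upN c x ≤ s.1 + 1 := (up_char hc x s).mp hxy
  have h2 := up_ge_dn_succ hc hx
  omega

lemma range_up_eq (hc : StrictMono c) {x y : α} (hx : x ∈ Set.range c) (hy : y ∈ Set.range c)
    (hup : upN c x = upN c y) : x = y := by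
  obtain ⟨s, rfl⟩ := hx; obtain ⟨t, rfl⟩ := hy
  rw [up_c hc, up_c hc] at hup
  exact congrArg c (Fin.ext (by omega))

lemma notrange_le_range_up (hc : StrictMono c) {x y : α} (hx : x ∉ Set.range c)
    (hy : y ∈ Set.range c) (hup : upN c x = upN c y) : x ≤ y := by
  obtain ⟨s, rfl⟩ := hy
  rw [up_c hc] at hup
  exact (up_char hc x s).mpr (by omega)

lemma range_le_notrange_up (hc : StrictMono c) {x y : α} (hx : x ∈ Set.range c)
    (hy : y ∉ Set.range c) (hup : upN c x = upN c y) (hxy : x ≤ y) : False := by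
  obtain ⟨s, rfl⟩ := hx
  rw [up_c hc] at hup
  have h1 : s.1 < dnN c y := (dn_char hc y s).mp hxy
  have h2 := up_ge_dn_succ hc hy
  omega

/-- The `dn`-lexicographic glueing of the block relations. -/
def Wrel [PartialOrder α] {h : ℕ} (c : Fin h → α)
    (K : ∀ i : ℕ, ↥(Dn c i) → ↥(Dn c i) → Prop) (x y : α) : Prop :=
  dnN c x < dnN c y ∨
    (dnN c x = dnN c y ∧ (x = y ∨ x ∈ Set.range c ∨ TRel (K (dnN c x)) x y))

/-- The `up`-lexicographic glueing of the block relations. -/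
def Vrel [PartialOrder α] {h : ℕ} (c : Fin h → α)
    (K : ∀ u : ℕ, ↥(UpS c u) → ↥(UpS c u) → Prop) (x y : α) : Prop :=
  upN c x < upN c y ∨
    (upN c x = upN c y ∧ (x = y ∨ y ∈ Set.range c ∨ TRel (K (upN c x)) x y))

lemma Wrel_linext (hc : StrictMono c) (K : ∀ i : ℕ, ↥(Dn c i) → ↥(Dn c i) → Prop)
    (hK : ∀ i, IsLinExt (K i)) : IsLinExt (Wrel c K) := by
  have ktrans : ∀ i (a b d : ↥(Dn c i)), K i a b → K i b d → K i a d :=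
    fun i => (hK i).1.toIsPartialOrder.toIsPreorder.toIsTrans.trans
  have kanti : ∀ i (a b : ↥(Dn c i)), K i a b → K i b a → a = b :=
    fun i => (hK i).1.toIsPartialOrder.toAntisymm.antisymm
  have ktotal : ∀ i (a b : ↥(Dn c i)), K i a b ∨ K i b a :=
    fun i => (hK i).1.toTotal.total
  constructor
  · refine { refl := ?_, trans := ?_, antisymm := ?_, total := ?_ }
    · intro x
      exact Or.inr ⟨rfl, Or.inl rfl⟩
    · intro x y z hxy hyz
      rcases hxy with h1 | ⟨h1, t1⟩
      · rcases hyz with h2 | ⟨h2, t2⟩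
        · exact Or.inl (h1.trans h2)
        · exact Or.inl (h2 ▸ h1)
      · rcases hyz with h2 | ⟨h2, t2⟩
        · exact Or.inl (h1 ▸ h2)
        · refine Or.inr ⟨h1.trans h2, ?_⟩
          rw [← h1] at t2
          rcases t1 with rfl | hxR | ⟨hx, hy, hk⟩
          · exact t2
          · exact Or.inr (Or.inl hxR)
          · rcases t2 with rfl | hyR | ⟨hy', hz, hk2⟩
            · exact Or.inr (Or.inr ⟨hx, hy, hk⟩)
            · exact absurd hyR hy.1
            · exact Or.inr (Or.inr ⟨hx, hz, ktrans _ _ _ _ hk hk2⟩)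
    · intro x y hxy hyx
      rcases hxy with h1 | ⟨h1, t1⟩
      · rcases hyx with h2 | ⟨h2, _⟩ <;> omega
      · rcases hyx with h2 | ⟨h2, t2⟩
        · omega
        · rw [← h1] at t2
          rcases t1 with rfl | hxR | ⟨hx, hy, hk⟩
          · rfl
          · rcases t2 with rfl | hyR | ⟨hy', hx', hk2⟩
            · rfl
            · exact range_dn_eq hc hxR hyR h1
            · exact absurd hxR hx'.1
          · rcases t2 with rfl | hyR | ⟨hy', hx', hk2⟩
            · rfl
            · exact absurd hyR hy.1
            · have := kanti _ _ _ hk hk2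
              exact congrArg Subtype.val this
    · intro x y
      rcases Nat.lt_trichotomy (dnN c x) (dnN c y) with h1 | h1 | h1
      · exact Or.inl (Or.inl h1)
      · by_cases hxy : x = y
        · exact Or.inl (Or.inr ⟨h1, Or.inl hxy⟩)
        · by_cases hxR : x ∈ Set.range c
          · exact Or.inl (Or.inr ⟨h1, Or.inr (Or.inl hxR)⟩)
          · by_cases hyR : y ∈ Set.range c
            · exact Or.inr (Or.inr ⟨h1.symm, Or.inr (Or.inl hyR)⟩)
            · have hx : x ∈ Dn c (dnN c x) := ⟨hxR, rfl⟩
              have hy : y ∈ Dn c (dnN c x) := ⟨hyR, h1.symm⟩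
              rcases ktotal (dnN c x) ⟨x, hx⟩ ⟨y, hy⟩ with hk | hk
              · exact Or.inl (Or.inr ⟨h1, Or.inr (Or.inr ⟨hx, hy, hk⟩)⟩)
              · refine Or.inr (Or.inr ⟨h1.symm, Or.inr (Or.inr ?_)⟩)
                rw [← h1]
                exact ⟨hy, hx, hk⟩
      · exact Or.inr (Or.inl h1)
  · intro x y hxy
    rcases lt_or_eq_of_le (dn_mono (c := c) hxy) with h1 | h1
    · exact Or.inl h1
    · by_cases hxy0 : x = y
      · exact Or.inr ⟨h1, Or.inl hxy0⟩
      · by_cases hxR : x ∈ Set.range c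
        · exact Or.inr ⟨h1, Or.inr (Or.inl hxR)⟩
        · by_cases hyR : y ∈ Set.range c
          · exact absurd (notrange_le_range_dn hc hxR hyR h1 hxy) (fun hh => hh)
          · refine Or.inr ⟨h1, Or.inr (Or.inr ⟨⟨hxR, rfl⟩, ⟨hyR, h1.symm⟩, ?_⟩)⟩
            exact (hK (dnN c x)).2 ⟨x, ⟨hxR, rfl⟩⟩ ⟨y, ⟨hyR, h1.symm⟩⟩
              (Subtype.mk_le_mk.mpr hxy)

lemma Wrel_rev_lt (K : ∀ i : ℕ, ↥(Dn c i) → ↥(Dn c i) → Prop) {x y : α}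
    (hlt : dnN c y < dnN c x) : Wrel c K y x ∧ ¬ Wrel c K x y := by
  refine ⟨Or.inl hlt, ?_⟩
  rintro (hh | ⟨hh, _⟩) <;> omega

lemma Wrel_rev_eq (hc : StrictMono c) (K : ∀ i : ℕ, ↥(Dn c i) → ↥(Dn c i) → Prop) {x y : α}
    (hxy : ¬ x ≤ y) (heq : dnN c y = dnN c x)
    (hxR : x ∉ Set.range c) (hyR : y ∉ Set.range c)
    (hrev : K (dnN c x) ⟨y, ⟨hyR, heq⟩⟩ ⟨x, ⟨hxR, rfl⟩⟩)
    (hnrev : ¬ K (dnN c x) ⟨x, ⟨hxR, rfl⟩⟩ ⟨y, ⟨hyR, heq⟩⟩) :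
    Wrel c K y x ∧ ¬ Wrel c K x y := by
  constructor
  · refine Or.inr ⟨heq, Or.inr (Or.inr ?_)⟩
    rw [heq]
    exact ⟨⟨hyR, heq⟩, ⟨hxR, rfl⟩, hrev⟩
  · rintro (hh | ⟨hh, rfl | hR | ⟨h2, h3, hk⟩⟩)
    · omega
    · exact hxy le_rfl
    · exact hxR hR
    · exact hnrev hk

lemma Vrel_linext (hc : StrictMono c) (K : ∀ u : ℕ, ↥(UpS c u) → ↥(UpS c u) → Prop)
    (hK : ∀ u, IsLinExt (K u)) : IsLinExt (Vrel c K) := by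
  have ktrans : ∀ u (a b d : ↥(UpS c u)), K u a b → K u b d → K u a d :=
    fun u => (hK u).1.toIsPartialOrder.toIsPreorder.toIsTrans.trans
  have kanti : ∀ u (a b : ↥(UpS c u)), K u a b → K u b a → a = b :=
    fun u => (hK u).1.toIsPartialOrder.toAntisymm.antisymm
  have ktotal : ∀ u (a b : ↥(UpS c u)), K u a b ∨ K u b a :=
    fun u => (hK u).1.toTotal.total
  constructor
  · refine { refl := ?_, trans := ?_, antisymm := ?_, total := ?_ }
    · intro x
      exact Or.inr ⟨rfl, Or.inl rfl⟩
    · intro x y z hxy hyz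
      rcases hxy with h1 | ⟨h1, t1⟩
      · rcases hyz with h2 | ⟨h2, t2⟩
        · exact Or.inl (h1.trans h2)
        · exact Or.inl (h2 ▸ h1)
      · rcases hyz with h2 | ⟨h2, t2⟩
        · exact Or.inl (h1 ▸ h2)
        · refine Or.inr ⟨h1.trans h2, ?_⟩
          rw [← h1] at t2
          rcases t1 with rfl | hyR | ⟨hx, hy, hk⟩
          · exact t2
          · rcases t2 with rfl | hzR | ⟨hy', hz, hk2⟩
            · exact Or.inr (Or.inl hyR)
            · exact Or.inr (Or.inl hzR)
            · exact absurd hyR hy'.1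
          · rcases t2 with rfl | hzR | ⟨hy', hz, hk2⟩
            · exact Or.inr (Or.inr ⟨hx, hy, hk⟩)
            · exact Or.inr (Or.inl hzR)
            · exact Or.inr (Or.inr ⟨hx, hz, ktrans _ _ _ _ hk hk2⟩)
    · intro x y hxy hyx
      rcases hxy with h1 | ⟨h1, t1⟩
      · rcases hyx with h2 | ⟨h2, _⟩ <;> omega
      · rcases hyx with h2 | ⟨h2, t2⟩
        · omega
        · rw [← h1] at t2
          rcases t1 with rfl | hyR | ⟨hx, hy, hk⟩
          · rfl
          · rcases t2 with rfl | hxR | ⟨hy', hx', hk2⟩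
            · rfl
            · exact range_up_eq hc hxR hyR h1
            · exact absurd hyR hy'.1
          · rcases t2 with rfl | hxR | ⟨hy', hx', hk2⟩
            · rfl
            · exact absurd hxR hx.1
            · have := kanti _ _ _ hk hk2
              exact congrArg Subtype.val this
    · intro x y
      rcases Nat.lt_trichotomy (upN c x) (upN c y) with h1 | h1 | h1
      · exact Or.inl (Or.inl h1)
      · by_cases hxy : x = y
        · exact Or.inl (Or.inr ⟨h1, Or.inl hxy⟩)
        · by_cases hyR : y ∈ Set.range c
          · exact Or.inl (Or.inr ⟨h1, Or.inr (Or.inl hyR)⟩)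
          · by_cases hxR : x ∈ Set.range c
            · exact Or.inr (Or.inr ⟨h1.symm, Or.inr (Or.inl hxR)⟩)
            · have hx : x ∈ UpS c (upN c x) := ⟨hxR, rfl⟩
              have hy : y ∈ UpS c (upN c x) := ⟨hyR, h1.symm⟩
              rcases ktotal (upN c x) ⟨x, hx⟩ ⟨y, hy⟩ with hk | hk
              · exact Or.inl (Or.inr ⟨h1, Or.inr (Or.inr ⟨hx, hy, hk⟩)⟩)
              · refine Or.inr (Or.inr ⟨h1.symm, Or.inr (Or.inr ?_)⟩)
                rw [← h1]
                exact ⟨hy, hx, hk⟩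
      · exact Or.inr (Or.inl h1)
  · intro x y hxy
    rcases lt_or_eq_of_le (up_mono (c := c) hxy) with h1 | h1
    · exact Or.inl h1
    · by_cases hxy0 : x = y
      · exact Or.inr ⟨h1, Or.inl hxy0⟩
      · by_cases hyR : y ∈ Set.range c
        · exact Or.inr ⟨h1, Or.inr (Or.inl hyR)⟩
        · by_cases hxR : x ∈ Set.range c
          · exact absurd (range_le_notrange_up hc hxR hyR h1 hxy) (fun hh => hh)
          · refine Or.inr ⟨h1, Or.inr (Or.inr ⟨⟨hxR, rfl⟩, ⟨hyR, h1.symm⟩, ?_⟩)⟩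
            exact (hK (upN c x)).2 ⟨x, ⟨hxR, rfl⟩⟩ ⟨y, ⟨hyR, h1.symm⟩⟩
              (Subtype.mk_le_mk.mpr hxy)

lemma Vrel_rev_lt (K : ∀ u : ℕ, ↥(UpS c u) → ↥(UpS c u) → Prop) {x y : α}
    (hlt : upN c y < upN c x) : Vrel c K y x ∧ ¬ Vrel c K x y := by
  refine ⟨Or.inl hlt, ?_⟩
  rintro (hh | ⟨hh, _⟩) <;> omega

lemma Vrel_rev_eq (hc : StrictMono c) (K : ∀ u : ℕ, ↥(UpS c u) → ↥(UpS c u) → Prop) {x y : α}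
    (hxy : ¬ x ≤ y) (heq : upN c y = upN c x)
    (hxR : x ∉ Set.range c) (hyR : y ∉ Set.range c)
    (hrev : K (upN c x) ⟨y, ⟨hyR, heq⟩⟩ ⟨x, ⟨hxR, rfl⟩⟩)
    (hnrev : ¬ K (upN c x) ⟨x, ⟨hxR, rfl⟩⟩ ⟨y, ⟨hyR, heq⟩⟩) :
    Vrel c K y x ∧ ¬ Vrel c K x y := by
  constructor
  · refine Or.inr ⟨heq, Or.inr (Or.inr ?_)⟩
    rw [heq]
    exact ⟨⟨hyR, heq⟩, ⟨hxR, rfl⟩, hrev⟩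
  · rintro (hh | ⟨hh, rfl | hR | ⟨h2, h3, hk⟩⟩)
    · omega
    · exact hxy le_rfl
    · exact hyR hR
    · exact hnrev hk

end Glue

/-- If every convex subposet of height at most `2k − 2` has dimension at most `d_0`,
then at most `2 d_0` linear extensions reverse all safe incomparable pairs. -/
theorem safe_pairs_reversed {α : Type*} [PartialOrder α] [Fintype α] (k : ℕ) (hk : 2 ≤ k)
    (hexc : ¬ Nonempty (TwoChains k ↪o α))
    (c : Fin (pheight α) → α) (hc : StrictMono c)
    (d0 : ℕ)
    (hconv : ∀ Q : Set α, Q.OrdConnected → heightSet Q ≤ 2 * k - 2 → pdim ↥Q ≤ d0) :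
    RealizerOn (2 * d0) {p ∈ IncPairs α | ¬ Dangerous c p} := by
  classical
  have hmax : ∀ t : Finset α, IsChain (· ≤ ·) (↑t : Set α) → t.card ≤ pheight α :=
    fun t ht => chain_card_le_pheight t ht
  -- convexity of the blocks
  have hDnConv : ∀ i : ℕ, (Dn c i).OrdConnected := by
    intro i
    constructor
    intro x hx y hy z hz
    have h1 : dnN c x ≤ dnN c z := dn_mono hz.1
    have h2 : dnN c z ≤ dnN c y := dn_mono hz.2
    rw [hx.2] at h1
    rw [hy.2] at h2
    refine ⟨?_, le_antisymm h2 h1⟩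
    rintro ⟨s, rfl⟩
    have h3 : upN c x ≤ s.1 + 1 := (up_char hc x s).mp hz.1
    have h4 := up_ge_dn_succ hc hx.1
    have h5 := dn_c hc s
    rw [hx.2] at h4
    omega
  have hUpConv : ∀ u : ℕ, (UpS c u).OrdConnected := by
    intro u
    constructor
    intro x hx y hy z hz
    have h1 : upN c x ≤ upN c z := up_mono hz.1
    have h2 : upN c z ≤ upN c y := up_mono hz.2
    rw [hx.2] at h1
    rw [hy.2] at h2
    refine ⟨?_, le_antisymm h2 h1⟩
    rintro ⟨s, rfl⟩
    have h3 : s.1 < dnN c y := (dn_char hc y s).mp hz.2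
    have h4 := up_ge_dn_succ hc hy.1
    have h5 := up_c hc s
    rw [hy.2] at h4
    omega
  have hDnH : ∀ i, heightSet (Dn c i) ≤ 2 * k - 2 :=
    fun i => heightSet_le_of (fun t h1 h2 => dn_chain_card hc hmax hexc hk i t h1 h2)
  have hUpH : ∀ u, heightSet (UpS c u) ≤ 2 * k - 2 :=
    fun u => heightSet_le_of (fun t h1 h2 => up_chain_card hc hmax hexc hk u t h1 h2)
  -- block realizers
  have hDnR : ∀ i : ℕ, ∃ K : Fin d0 → ↥(Dn c i) → ↥(Dn c i) → Prop,
      (∀ j, IsLinExt (K j)) ∧ ∀ a b : ↥(Dn c i), ¬ a ≤ b → ∃ j, K j b a ∧ ¬ K j a b :=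
    fun i => realizer_of_pdim_le (hconv _ (hDnConv i) (hDnH i))
  have hUpR : ∀ u : ℕ, ∃ K : Fin d0 → ↥(UpS c u) → ↥(UpS c u) → Prop,
      (∀ j, IsLinExt (K j)) ∧ ∀ a b : ↥(UpS c u), ¬ a ≤ b → ∃ j, K j b a ∧ ¬ K j a b :=
    fun u => realizer_of_pdim_le (hconv _ (hUpConv u) (hUpH u))
  choose KD hKD1 hKD2 using hDnR
  choose KU hKU1 hKU2 using hUpR
  have hd0 : 1 ≤ d0 :=
    le_trans (pdim_pos ↥(Dn c 0)) (hconv _ (hDnConv 0) (hDnH 0))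
  set LL : Fin (2 * d0) → α → α → Prop := fun j =>
    if hj : j.1 < d0 then Wrel c (fun i => KD i ⟨j.1, hj⟩)
    else Vrel c (fun u => KU u ⟨j.1 - d0, by have := j.isLt; omega⟩) with hLLdef
  have hLLW : ∀ (j : Fin (2 * d0)) (hj : j.1 < d0),
      LL j = Wrel c (fun i => KD i ⟨j.1, hj⟩) := by
    intro j hj
    simp only [hLLdef]
    rw [dif_pos hj]
  have hLLV : ∀ (j : Fin (2 * d0)) (hj : ¬ j.1 < d0),
      LL j = Vrel c (fun u => KU u ⟨j.1 - d0, by have := j.isLt; omega⟩) := by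
    intro j hj
    simp only [hLLdef]
    rw [dif_neg hj]
  refine ⟨LL, ?_, ?_⟩
  · intro j
    by_cases hj : j.1 < d0
    · rw [hLLW j hj]
      exact Wrel_linext hc _ (fun i => hKD1 i _)
    · rw [hLLV j hj]
      exact Vrel_linext hc _ (fun u => hKU1 u _)
  · rintro ⟨x, y⟩ ⟨hinc, hnd⟩
    have hxy : ¬ x ≤ y := hinc.1
    have hyx : ¬ y ≤ x := hinc.2
    -- dn(y) < up(x) always for incomparable pairs
    have hdnyupx : dnN c y < upN c x := by
      by_contra hcon
      push_neg at hcon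
      have hux : upN c x ≤ pheight α := le_trans hcon (dn_le y)
      have hposx := up_pos (c := c) x
      have h1 := le_c_of_up hc hux
      have h2 := c_dn_le hc (le_trans hposx hcon)
      have h3 : (⟨upN c x - 1, by omega⟩ : Fin (pheight α)) ≤
          ⟨dnN c y - 1, by have := dn_le (c := c) y; omega⟩ := by
        simp only [Fin.mk_le_mk]
        omega
      exact hxy (le_trans h1 (le_trans (hc.monotone h3) h2))
    have hcases : dnN c y ≤ dnN c x ∨ upN c y ≤ upN c x := by
      by_contra hcon
      push_neg at hcon
      exact hnd ⟨hcon.1, hdnyupx, hcon.2⟩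
    rcases hcases with hcase | hcase
    · -- type 1 : use the W family
      rcases lt_or_eq_of_le hcase with hlt | heq1
      · refine ⟨⟨0, by omega⟩, ?_⟩
        rw [hLLW ⟨0, by omega⟩ (show (0:ℕ) < d0 by omega)]
        exact Wrel_rev_lt _ hlt
      · -- equal down-indices : both off the chain
        have hxR : x ∉ Set.range c := by
          intro hxR'
          by_cases hyR' : y ∈ Set.range c
          · exact hxy (le_of_eq (range_dn_eq hc hxR' hyR' heq1.symm))
          · exact hxy (range_le_dn_eq hc hxR' hyR' heq1.symm)
        have hyR : y ∉ Set.range c := by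
          intro hyR'
          exact hyx (range_le_dn_eq hc hyR' hxR heq1)
        have hxD : x ∈ Dn c (dnN c x) := ⟨hxR, rfl⟩
        have hyD : y ∈ Dn c (dnN c x) := ⟨hyR, heq1⟩
        have hab : ¬ (⟨x, hxD⟩ : ↥(Dn c (dnN c x))) ≤ ⟨y, hyD⟩ :=
          fun hh => hxy (Subtype.mk_le_mk.mp hh)
        obtain ⟨j, hk1, hk2⟩ := hKD2 (dnN c x) ⟨x, hxD⟩ ⟨y, hyD⟩ hab
        have hjlt : j.1 < d0 := j.isLt
        refine ⟨⟨j.1, by omega⟩, ?_⟩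
        rw [hLLW ⟨j.1, by omega⟩ hjlt]
        have hjeq : (⟨j.1, hjlt⟩ : Fin d0) = j := Fin.ext rfl
        rw [hjeq]
        exact Wrel_rev_eq hc _ hxy heq1 hxR hyR hk1 hk2
    · -- type 2 : use the V family
      rcases lt_or_eq_of_le hcase with hlt | heq1
      · have hj0 : ¬ (d0 + 0 < d0) := by omega
        refine ⟨⟨d0, by omega⟩, ?_⟩
        rw [hLLV ⟨d0, by omega⟩ (by simp)]
        exact Vrel_rev_lt _ hlt
      · have hxR : x ∉ Set.range c := by
          intro hxR'
          by_cases hyR' : y ∈ Set.range c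
          · exact hxy (le_of_eq (range_up_eq hc hxR' hyR' heq1.symm))
          · exact hyx (notrange_le_range_up hc hyR' hxR' heq1)
        have hyR : y ∉ Set.range c := by
          intro hyR'
          exact hxy (notrange_le_range_up hc hxR hyR' heq1.symm)
        have hxU : x ∈ UpS c (upN c x) := ⟨hxR, rfl⟩
        have hyU : y ∈ UpS c (upN c x) := ⟨hyR, heq1⟩
        have hab : ¬ (⟨x, hxU⟩ : ↥(UpS c (upN c x))) ≤ ⟨y, hyU⟩ :=
          fun hh => hxy (Subtype.mk_le_mk.mp hh)
        obtain ⟨j, hk1, hk2⟩ := hKU2 (upN c x) ⟨x, hxU⟩ ⟨y, hyU⟩ hab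
        have hjlt : j.1 < d0 := j.isLt
        have hnlt : ¬ (d0 + j.1 < d0) := by omega
        refine ⟨⟨d0 + j.1, by omega⟩, ?_⟩
        rw [hLLV ⟨d0 + j.1, by omega⟩ hnlt]
        have hjeq : (⟨d0 + j.1 - d0, by omega⟩ : Fin d0) = j :=
          Fin.ext (by show d0 + j.1 - d0 = j.1; omega)
        rw [hjeq]
        exact Vrel_rev_eq hc _ hxy heq1 hxR hyR hk1 hk2
end
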